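/- Let R_2 = X·R ∈ F_2[[X]] where R is the generating series of the Rudin–Shapiro sequence. The composition inverse V of R_2 satisfies (X^2 + X + 1)V^5 + X^2 V^4 + (X^2 + X)V + X^2 = 0. -/

import Mathlib

open PowerSeries

/-- Composition `f(g(X))` of formal power series (meaningful when the
constant coefficient of `g` is zero). -/
noncomputable def PowerSeries.comp {R : Type*} [CommRing R]
    (f g : PowerSeries R) : PowerSeries R :=
  PowerSeries.mk fun n =>
    ∑ k ∈ Finset.range (n + 1), PowerSeries.coeff k f * PowerSeries.coeff n (g ^ k)

namespace RSaux

variable {A : Type*} [CommRing A] {V : PowerSeries A}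

lemma coeff_pow_V (hV0 : constantCoeff V = 0) {n k : ℕ} (h : n < k) :
    coeff n (V ^ k) = 0 := by
  obtain ⟨w, hw⟩ := (X_dvd_iff.2 hV0)
  have : V ^ k = X ^ k * w ^ k := by rw [hw, mul_pow]
  rw [this, coeff_X_pow_mul', if_neg (by omega)]

/-- evaluation of a polynomial at V -/
noncomputable def E (V : PowerSeries A) (p : Polynomial A) : PowerSeries A :=
  p.eval₂ (PowerSeries.C) V

lemma coeff_E (p : Polynomial A) (n : ℕ) :
    coeff n (E V p) = ∑ k ∈ p.support, p.coeff k * coeff n (V ^ k) := by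
  rw [E, Polynomial.eval₂_eq_sum, Polynomial.sum, map_sum]
  exact Finset.sum_congr rfl fun k _ => by rw [coeff_C_mul]

lemma coeff_E_trunc (f : PowerSeries A) {N : ℕ} (n : ℕ) :
    coeff n (E V (trunc N f)) = ∑ k ∈ Finset.range N, coeff k f * coeff n (V ^ k) := by
  rw [coeff_E]
  have hs : (trunc N f).support ⊆ Finset.range N := by
    intro k hk
    rw [Finset.mem_range]
    by_contra h
    exact (Polynomial.mem_support_iff.1 hk) (by rw [coeff_trunc, if_neg h])
  rw [Finset.sum_subset hs (fun k _ hk => by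
    rw [Polynomial.notMem_support_iff.1 hk, zero_mul])]
  exact Finset.sum_congr rfl fun k hk => by rw [coeff_trunc, if_pos (Finset.mem_range.1 hk)]

lemma coeff_comp (hV0 : constantCoeff V = 0) (f : PowerSeries A) {n N : ℕ} (hn : n < N) :
    coeff n (f.comp V) = coeff n (E V (trunc N f)) := by
  rw [coeff_E_trunc, PowerSeries.comp, coeff_mk]
  refine Finset.sum_subset (Finset.range_subset_range.2 hn) fun k _ hk => ?_
  rw [coeff_pow_V hV0 (by simp only [Finset.mem_range] at hk; omega), mul_zero]

lemma comp_mul (hV0 : constantCoeff V = 0) (f g : PowerSeries A) :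
    (f * g).comp V = f.comp V * g.comp V := by
  ext n
  rw [coeff_comp hV0 _ (Nat.lt_succ_self n), PowerSeries.coeff_mul]
  have h : ∀ h : PowerSeries A, ∀ i ≤ n, coeff i (h.comp V) = coeff i (E V (trunc (n+1) h)) :=
    fun h i hi => coeff_comp hV0 h (by omega)
  rw [Finset.sum_congr rfl fun p hp => by
    rw [h f p.1 (by have := Finset.HasAntidiagonal.mem_antidiagonal.1 hp; omega),
        h g p.2 (by have := Finset.HasAntidiagonal.mem_antidiagonal.1 hp; omega)]]
  rw [← PowerSeries.coeff_mul]
  have hE : E V (trunc (n+1) f) * E V (trunc (n+1) g) = E V (trunc (n+1) f * trunc (n+1) g) := by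
    rw [E, E, E, Polynomial.eval₂_mul]
  rw [hE]
  have key : ∀ p q : Polynomial A, (∀ k ≤ n, p.coeff k = q.coeff k) →
      coeff n (E V p) = coeff n (E V q) := by
    intro p q hpq
    have : coeff n (E V (p - q)) = 0 := by
      rw [coeff_E]
      refine Finset.sum_eq_zero fun k hk => ?_
      rcases le_or_gt k n with h | h
      · rw [Polynomial.coeff_sub, hpq k h, sub_self, zero_mul]
      · rw [coeff_pow_V hV0 h, mul_zero]
    have hsub : E V (p - q) = E V p - E V q := by
      simp [E, Polynomial.eval₂_sub]
    rw [hsub, map_sub] at this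
    exact sub_eq_zero.1 this
  refine key _ _ fun k hk => ?_
  rw [Polynomial.coeff_mul, coeff_trunc, if_pos (by omega), PowerSeries.coeff_mul]
  refine Finset.sum_congr rfl fun p hp => ?_
  have := Finset.HasAntidiagonal.mem_antidiagonal.1 hp
  rw [coeff_trunc, coeff_trunc, if_pos (by omega), if_pos (by omega)]

lemma comp_add (f g : PowerSeries A) : (f + g).comp V = f.comp V + g.comp V := by
  ext n
  simp [PowerSeries.comp, coeff_mk, add_mul, Finset.sum_add_distrib]

lemma comp_one : (1 : PowerSeries A).comp V = 1 := by
  ext n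
  rw [PowerSeries.comp, coeff_mk, Finset.sum_eq_single 0]
  · simp
  · intro b _ hb
    simp [PowerSeries.coeff_one, hb]
  · intro h
    exact absurd (Finset.mem_range.2 (by omega)) h

lemma comp_X (hV0 : constantCoeff V = 0) : (X : PowerSeries A).comp V = V := by
  ext n
  rw [PowerSeries.comp, coeff_mk]
  rcases Nat.eq_zero_or_pos n with rfl | hn
  · simp [PowerSeries.coeff_X]
    exact hV0.symm ▸ (by simp [← PowerSeries.coeff_zero_eq_constantCoeff, hV0])
  · rw [Finset.sum_eq_single 1]
    · simp
    · intro b _ hb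
      simp [PowerSeries.coeff_X, hb]
    · intro h
      exact absurd (Finset.mem_range.2 (by omega)) h

lemma comp_pow (hV0 : constantCoeff V = 0) (f : PowerSeries A) (k : ℕ) :
    (f ^ k).comp V = (f.comp V) ^ k := by
  induction k with
  | zero => simpa using comp_one
  | succ k ih => rw [pow_succ, comp_mul hV0, ih, pow_succ]

lemma comp_zero : (0 : PowerSeries A).comp V = 0 := by
  ext n
  simp [PowerSeries.comp, coeff_mk]

lemma coeff_sq (f : PowerSeries (ZMod 2)) (n : ℕ) :
    coeff n (f ^ 2) = if 2 ∣ n then coeff (n / 2) f else 0 := by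
  rw [sq, PowerSeries.coeff_mul]
  rw [← Finset.sum_filter_add_sum_filter_not (Finset.HasAntidiagonal.antidiagonal n)
      (fun p => p.1 = p.2) (fun p => coeff p.1 f * coeff p.2 f)]
  have hzero : ∑ p ∈ (Finset.HasAntidiagonal.antidiagonal n).filter (fun p => ¬ p.1 = p.2),
      coeff p.1 f * coeff p.2 f = 0 := by
    refine Finset.sum_involution (fun p _ => p.swap) ?_ ?_ ?_ ?_
    · intro p hp
      rw [Prod.fst_swap, Prod.snd_swap, mul_comm]
      exact (by decide : ∀ a : ZMod 2, a + a = 0) _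
    · intro p hp _
      simp only [Finset.mem_filter] at hp
      intro h
      exact hp.2 (congrArg Prod.snd h)
    · intro p hp
      simp only [Finset.mem_filter, Finset.HasAntidiagonal.mem_antidiagonal, Prod.fst_swap, Prod.snd_swap] at hp ⊢
      exact ⟨by omega, fun h => hp.2 h.symm⟩
    · intro p hp
      simp
  rw [hzero, add_zero]
  have hdiag : (Finset.HasAntidiagonal.antidiagonal n).filter (fun p => p.1 = p.2)
      = if 2 ∣ n then {(n/2, n/2)} else ∅ := by
    split_ifs with h
    · ext p
      simp only [Finset.mem_filter, Finset.HasAntidiagonal.mem_antidiagonal, Finset.mem_singleton, Prod.ext_iff]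
      omega
    · ext p
      simp only [Finset.mem_filter, Finset.HasAntidiagonal.mem_antidiagonal, Finset.notMem_empty, iff_false,
        not_and]
      intro hpn
      omega
  rw [hdiag]
  split_ifs
  · rw [Finset.sum_singleton]
    exact (by decide : ∀ a : ZMod 2, a * a = a) _
  · simp

end RSaux

open RSaux in
theorem rudin_shapiro_shift_inverse_equation
    (r : ℕ → ZMod 2) (h0 : r 0 = 1)
    (h2 : ∀ n, r (2 * n) = r n)
    (h41 : ∀ n, r (4 * n + 1) = r n)
    (h43 : ∀ n, r (4 * n + 3) = 1 + r (2 * n + 1))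
    (R R₂ V : PowerSeries (ZMod 2))
    (hR : R = PowerSeries.mk r) (hR2 : R₂ = PowerSeries.X * R)
    (hV0 : PowerSeries.constantCoeff V = 0)
    (hRV : PowerSeries.comp R₂ V = PowerSeries.X) :
    (PowerSeries.X ^ 2 + PowerSeries.X + 1) * V ^ 5 + PowerSeries.X ^ 2 * V ^ 4
      + (PowerSeries.X ^ 2 + PowerSeries.X) * V + PowerSeries.X ^ 2 = 0 := by
  have htwo : (1 + 1 : PowerSeries (ZMod 2)) = 0 := by
    rw [← map_one (PowerSeries.C), ← map_add,
      (by decide : (1 + 1 : ZMod 2) = 0), map_zero]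
  have htwoZ : ∀ a : ZMod 2, a + a = 0 := by decide
  -- values of r
  have hr1 : r 1 = 1 := by have := h41 0; rw [h0] at this; simpa using this
  have hr2 : r 2 = 1 := by have := h2 1; rw [hr1] at this; simpa using this
  have hr3 : r 3 = 0 := by
    have := h43 0; simp only [Nat.mul_zero, Nat.zero_add] at this
    rw [this, hr1]; decide
  have hr4 : r 4 = 1 := by have := h2 2; rw [hr2] at this; simpa using this
  have hr5 : r 5 = 1 := by have := h41 1; rw [hr1] at this; simpa using this
  have hr6 : r 6 = 0 := by have := h2 3; rw [hr3] at this; simpa using this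
  have hr7 : r 7 = 1 := by
    have := h43 1; simp only [Nat.mul_one] at this
    rw [this, hr3]; decide
  -- coefficient lemmas
  have hcR : ∀ j, coeff j R = r j := fun j => by rw [hR, coeff_mk]
  have hs_even : ∀ j, coeff (2 * j) (R ^ 2) = r j := fun j => by
    rw [coeff_sq, if_pos ⟨j, rfl⟩, Nat.mul_div_cancel_left _ (by norm_num), hcR]
  have hs_odd : ∀ j, coeff (2 * j + 1) (R ^ 2) = 0 := fun j => by
    rw [coeff_sq, if_neg (by omega)]
  -- the expanded equation for R
  have Aexp : R^2 + R^2 * X^1 + R^2 * X^4 + R^2 * X^5 + R + R * X^4 + X^3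
      = (0 : PowerSeries (ZMod 2)) := by
    ext m
    rw [map_add, map_add, map_add, map_add, map_add, map_add, map_zero,
      coeff_mul_X_pow', coeff_mul_X_pow', coeff_mul_X_pow', coeff_mul_X_pow',
      PowerSeries.coeff_X_pow]
    rcases lt_or_ge m 8 with hm | hm
    · have c0 := hs_even 0
      have c2 := hs_even 1
      have c4 := hs_even 2
      have c6 := hs_even 3
      have c1 := hs_odd 0
      have c3 := hs_odd 1
      have c5 := hs_odd 2
      have c7 := hs_odd 3
      norm_num at c0 c1 c2 c3 c4 c5 c6 c7
      have hcc : constantCoeff R = r 0 := by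
        rw [← PowerSeries.coeff_zero_eq_constantCoeff, hcR]
      interval_cases m <;>
        norm_num [c0, c1, c2, c3, c4, c5, c6, c7, hcR, hcc, h0, hr1, hr2, hr3, hr4, hr5,
          hr6, hr7] <;> decide
    · obtain ⟨q, t, ht, rfl⟩ : ∃ q t, t < 4 ∧ m = 4*q+8+t :=
        ⟨(m-8)/4, (m-8)%4, by omega, by omega⟩
      interval_cases t
      · -- m = 4q+8
        rw [if_pos (by omega : (1:ℕ) ≤ _), if_pos (by omega : (4:ℕ) ≤ _),
          if_pos (by omega : (5:ℕ) ≤ _), if_pos (by omega : (4:ℕ) ≤ _), if_neg (by omega)]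
        rw [show 4*q+8-1 = 2*(2*q+3)+1 from by omega, show 4*q+8-4 = 2*(2*q+2) from by omega,
          show 4*q+8-5 = 2*(2*q+1)+1 from by omega, show 4*q+8 = 2*(2*q+4) from by omega]
        rw [hs_even, hs_even, hs_odd, hs_odd, hcR, hcR, h2, h2]
        linear_combination (r (2*q+4) + r (2*q+2)) * (htwoZ 1)
      · -- m = 4q+9
        rw [if_pos (by omega : (1:ℕ) ≤ _), if_pos (by omega : (4:ℕ) ≤ _),
          if_pos (by omega : (5:ℕ) ≤ _), if_pos (by omega : (4:ℕ) ≤ _), if_neg (by omega)]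
        rw [show 4*q+8+1-1 = 2*(2*q+4) from by omega, show 4*q+8+1-4 = 2*(2*q+2)+1 from by omega,
          show 4*q+8+1-5 = 2*(2*q+2) from by omega, show 4*q+8+1 = 2*(2*q+4)+1 from by omega]
        rw [hs_even, hs_even, hs_odd, hs_odd, hcR, hcR]
        rw [show 2*(2*q+4)+1 = 4*(q+2)+1 from by omega, show 2*(2*q+2)+1 = 4*(q+1)+1 from by omega,
          h41, h41, show 2*q+4 = 2*(q+2) from by omega,
          show 2*q+2 = 2*(q+1) from by omega, h2, h2]
        linear_combination (r (q+2) + r (q+1)) * (htwoZ 1)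
      · -- m = 4q+10
        rw [if_pos (by omega : (1:ℕ) ≤ _), if_pos (by omega : (4:ℕ) ≤ _),
          if_pos (by omega : (5:ℕ) ≤ _), if_pos (by omega : (4:ℕ) ≤ _), if_neg (by omega)]
        rw [show 4*q+8+2-1 = 2*(2*q+4)+1 from by omega, show 4*q+8+2-4 = 2*(2*q+3) from by omega,
          show 4*q+8+2-5 = 2*(2*q+2)+1 from by omega, show 4*q+8+2 = 2*(2*q+5) from by omega]
        rw [hs_even, hs_even, hs_odd, hs_odd, hcR, hcR, h2, h2]
        linear_combination (r (2*q+5) + r (2*q+3)) * (htwoZ 1)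
      · -- m = 4q+11
        rw [if_pos (by omega : (1:ℕ) ≤ _), if_pos (by omega : (4:ℕ) ≤ _),
          if_pos (by omega : (5:ℕ) ≤ _), if_pos (by omega : (4:ℕ) ≤ _), if_neg (by omega)]
        rw [show 4*q+8+3-1 = 2*(2*q+5) from by omega, show 4*q+8+3-4 = 2*(2*q+3)+1 from by omega,
          show 4*q+8+3-5 = 2*(2*q+3) from by omega, show 4*q+8+3 = 2*(2*q+5)+1 from by omega]
        rw [hs_even, hs_even, hs_odd, hs_odd, hcR, hcR]
        rw [show 2*(2*q+5)+1 = 4*(q+2)+3 from by omega, show 2*(2*q+3)+1 = 4*(q+1)+3 from by omega,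
          h43, h43, show 2*(q+2)+1 = 2*q+5 from by omega, show 2*(q+1)+1 = 2*q+3 from by omega]
        linear_combination (r (2*q+5) + r (2*q+3) + 1) * (htwoZ 1)
  -- the equation for R₂
  have hR2eq : (1+X)^5 * R₂^2 + X*(1+X)^4*R₂ + X^5 = (0 : PowerSeries (ZMod 2)) := by
    rw [hR2]
    linear_combination X^2 * Aexp +
      (X^2*R^2*(2*X+5*X^2+5*X^3+2*X^4) + X^2*R*(2*X+3*X^2+2*X^3)) * htwo
  -- compose with V
  have hcomp := congrArg (fun f => PowerSeries.comp f V) hR2eq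
  simp only [comp_add, comp_mul hV0, comp_pow hV0, comp_X hV0, comp_one, comp_zero,
    hRV] at hcomp
  linear_combination hcomp -
    ((2*X^2+2*X)*V^4 + (5*X^2+3*X)*V^3 + (5*X^2+2*X)*V^2 + 2*X^2*V) * htwo
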